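/- arXiv:1212.6425 — 4 statements merged into one kernel-verified Lean document; each statement's English description precedes it below -/
import Mathlib

section
/- Let G be a countable group, Λ < G a subgroup, and θ : Λ → G an injective homomorphism with Λ ≠ G and θ(Λ) ≠ G. Let Γ = HNN(G, Λ, θ) be the HNN extension. If there exist h₁, …, h_m ∈ Γ with ⋂_{i=1}^m h_i Λ h_i⁻¹ = {e}, then Γ is not inner amenable; i.e., there is no conjugation-invariant finitely additive probability measure on Γ \ {e}. -/
open HNNExtension List Set

section Mean
variable {Γ : Type*} [Group Γ] {μ : Set Γ → ℝ}
  (hone : μ ({1}ᶜ) = 1) (hsing : μ {1} = 0)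
  (hpos : ∀ A : Set Γ, 0 ≤ μ A)
  (hmono : ∀ A B : Set Γ, A ⊆ B → μ A ≤ μ B)
  (hadd : ∀ A B : Set Γ, Disjoint A B → μ (A ∪ B) = μ A + μ B)
  (hconj : ∀ (g : Γ) (A : Set Γ), μ ((fun x => g * x * g⁻¹) '' A) = μ A)

set_option linter.unusedSectionVars false

include hone hsing hadd in
theorem mean_univ : μ univ = 1 := by
  have h : ({1}ᶜ : Set Γ) ∪ {1} = univ := by
    ext x; by_cases hx : x = 1 <;> simp [hx]
  rw [← h, hadd _ _ (by simp), hone, hsing, add_zero]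

include hadd in
theorem mean_empty : μ ∅ = 0 := by
  have := hadd ∅ ∅ (by simp)
  simp at this
  linarith

include hmono hadd in
theorem mean_union_le (A B : Set Γ) : μ (A ∪ B) ≤ μ A + μ B := by
  have h1 : A ∪ B = A ∪ (B \ A) := by ext x; by_cases hx : x ∈ A <;> simp [hx]
  rw [h1, hadd _ _ disjoint_sdiff_right]
  have := hmono (B \ A) B diff_subset
  linarith

include hpos hmono hadd in
theorem mean_union_zero {A B : Set Γ} (hA : μ A = 0) (hB : μ B = 0) : μ (A ∪ B) = 0 := by
  have := mean_union_le hmono hadd A B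
  have := hpos (A ∪ B)
  linarith

include hmono hadd in
theorem mean_biUnion_le {ι : Type*} (s : Finset ι) (A : ι → Set Γ) :
    μ (⋃ i ∈ s, A i) ≤ ∑ i ∈ s, μ (A i) := by
  classical
  induction s using Finset.induction_on with
  | empty => simp [mean_empty hadd]
  | insert _ _ hnotmem ih =>
    rename_i a s
    rw [Finset.set_biUnion_insert, Finset.sum_insert hnotmem]
    exact le_trans (mean_union_le hmono hadd _ _) (by linarith)

include hadd in
theorem mean_biUnion_eq {ι : Type*} (s : Finset ι) (A : ι → Set Γ)
    (hdisj : ∀ i ∈ s, ∀ j ∈ s, i ≠ j → Disjoint (A i) (A j)) :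
    μ (⋃ i ∈ s, A i) = ∑ i ∈ s, μ (A i) := by
  classical
  induction s using Finset.induction_on with
  | empty => simp [mean_empty hadd]
  | insert _ _ hnotmem ih =>
    rename_i a s
    rw [Finset.set_biUnion_insert, Finset.sum_insert hnotmem,
      hadd _ _ (disjoint_iUnion₂_right.2 fun i hi =>
        hdisj a (Finset.mem_insert_self a s) i (Finset.mem_insert_of_mem hi)
          (fun h => hnotmem (h ▸ hi))),
      ih (fun i hi j hj hij => hdisj i (Finset.mem_insert_of_mem hi)
        j (Finset.mem_insert_of_mem hj) hij)]

include hone hsing hpos hmono hadd hconj in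
/-- If a set has infinitely many pairwise-disjoint conjugates, its mean is zero. -/
theorem mean_zero_of_conj (S : Set Γ) (T : ℕ → Set Γ)
    (hsub : ∀ n : ℕ, ∃ c : Γ, ((fun x => c * x * c⁻¹) '' S) ⊆ T n)
    (hdisj : ∀ i j : ℕ, i ≠ j → Disjoint (T i) (T j)) : μ S = 0 := by
  classical
  have key : ∀ N : ℕ, (N : ℝ) * μ S ≤ 1 := by
    intro N
    choose c hc using hsub
    set A : ℕ → Set Γ := fun n => (fun x => c n * x * (c n)⁻¹) '' S with hA
    have h1 : μ (⋃ i ∈ Finset.range N, A i) = ∑ i ∈ Finset.range N, μ (A i) :=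
      mean_biUnion_eq hadd _ _ (fun i _ j _ hij =>
        Set.disjoint_of_subset (hc i) (hc j) (hdisj i j hij))
    have h2 : ∀ i, μ (A i) = μ S := fun i => hconj (c i) S
    have h3 : μ (⋃ i ∈ Finset.range N, A i) ≤ 1 := by
      rw [← mean_univ hone hsing hadd]
      exact hmono _ _ (subset_univ _)
    rw [h1] at h3
    simp only [h2, Finset.sum_const, Finset.card_range, nsmul_eq_mul] at h3
    exact h3
  by_contra hne
  have hlt : 0 < μ S := lt_of_le_of_ne (hpos S) (Ne.symm hne)
  obtain ⟨N, hN⟩ := exists_nat_gt (1 / μ S)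
  have h4 : 1 < (N : ℝ) * μ S := (div_lt_iff₀ hlt).1 hN
  linarith [key N]

include hpos hmono hconj in
theorem mean_zero_of_conj_subset {S Z : Set Γ} (c : Γ)
    (hmap : ∀ x ∈ S, c * x * c⁻¹ ∈ Z) (hZ : μ Z = 0) : μ S = 0 := by
  have h1 : ((fun x => c * x * c⁻¹) '' S) ⊆ Z := by
    rintro y ⟨x, hx, rfl⟩; exact hmap x hx
  have h2 := hmono _ _ h1
  rw [hconj, hZ] at h2
  exact le_antisymm h2 (hpos S)

end Mean

section HNN
variable {G : Type*} [Group G] (Λ B : Subgroup G) (θ : Λ ≃* B)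

noncomputable def dd : NormalWord.TransversalPair G Λ B :=
  Classical.choice (NormalWord.TransversalPair.nonempty G Λ B)

/-- the chain relation for reduced words -/
def Rr : ℤˣ × G → ℤˣ × G → Prop := fun a b => a.2 ∈ toSubgroup Λ B a.1 → a.1 = b.1

/-- letter to group element -/
def ff : ℤˣ × G → HNNExtension G Λ B θ := fun p => t ^ (p.1 : ℤ) * of p.2

/-- word product -/
def wprod (g₀ : G) (l : List (ℤˣ × G)) : HNNExtension G Λ B θ :=
  of g₀ * (l.map (ff Λ B θ)).prod

/-- the pattern of an element (sequence of exponents of `t` in the normal form) -/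
noncomputable def Pat (x : HNNExtension G Λ B θ) : List ℤˣ :=
  ((NormalWord.equiv θ (dd Λ B) x).toList.map Prod.fst)

theorem wprod_eq_prod (g₀ : G) (l : List (ℤˣ × G)) (hc : l.Chain' (Rr Λ B)) :
    wprod Λ B θ g₀ l = (NormalWord.ReducedWord.prod θ ⟨g₀, l, hc⟩ : HNNExtension G Λ B θ) := rfl

theorem pat_eq {x : HNNExtension G Λ B θ} (g₀ : G) (l : List (ℤˣ × G))
    (hc : l.Chain' (Rr Λ B)) (hx : wprod Λ B θ g₀ l = x) :
    l.map Prod.fst = Pat Λ B θ x := by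
  have h2 : ((NormalWord.equiv θ (dd Λ B) x).toReducedWord).prod θ = x :=
    (NormalWord.equiv θ (dd Λ B)).symm_apply_apply x
  have := ReducedWord.map_fst_eq_and_of_prod_eq θ
    (w₁ := ⟨g₀, l, hc⟩) (w₂ := (NormalWord.equiv θ (dd Λ B) x).toReducedWord)
    (by rw [show NormalWord.ReducedWord.prod θ (⟨g₀, l, hc⟩ : NormalWord.ReducedWord G Λ B)
          = wprod Λ B θ g₀ l from rfl, hx, h2])
  exact this.1

/-- elements with a reduced word of first exponent ε, last exponent δ,
head in Hh, last group letter in Ht -/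
def ES (ε δ : ℤˣ) (Hh Ht : Set G) : Set (HNNExtension G Λ B θ) :=
  {x | ∃ g₀ gk l, Chain' (Rr Λ B) (l ++ [(δ, gk)]) ∧
    ((l ++ [(δ, gk)]).map Prod.fst).head? = some ε ∧ g₀ ∈ Hh ∧ gk ∈ Ht ∧
    wprod Λ B θ g₀ (l ++ [(δ, gk)]) = x}

/-- elements with a reduced word of pattern `u^n (-u) …` ending with exponent `-u` -/
def QS (u : ℤˣ) (n : ℕ) : Set (HNNExtension G Λ B θ) :=
  {x | ∃ g₀ gk l rest, Chain' (Rr Λ B) (l ++ [(-u, gk)]) ∧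
    ((l ++ [(-u, gk)]).map Prod.fst = replicate n u ++ -u :: rest) ∧
    wprod Λ B θ g₀ (l ++ [(-u, gk)]) = x}

/-- elements with a reduced word of pattern `1^n (-1)^n` -/
def QS0 (n : ℕ) : Set (HNNExtension G Λ B θ) :=
  {x | ∃ g₀ gk l, Chain' (Rr Λ B) (l ++ [(-1, gk)]) ∧
    ((l ++ [(-1, gk)]).map Prod.fst = replicate n 1 ++ replicate n (-1)) ∧
    wprod Λ B θ g₀ (l ++ [(-1, gk)]) = x}

/-- nontrivial elements of `G` not in `Λ` -/
def SG : Set (HNNExtension G Λ B θ) := {x | ∃ g, g ∉ Λ ∧ of g = x}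

theorem base_mem (u : ℤˣ) (c : G) (hc : c ∉ toSubgroup Λ B u) {x : HNNExtension G Λ B θ}
    (hx : x ∈ ES Λ B θ (-u) u univ univ) :
    (t ^ (u:ℤ) * of c * t ^ (-(u:ℤ))) * x * (t ^ (u:ℤ) * of c * t ^ (-(u:ℤ)))⁻¹
      ∈ QS Λ B θ u 1 := by
  obtain ⟨g₀, gk, l, hch, hhd, -, -, hp⟩ := hx
  set X := l ++ [(u, gk)] with hX
  obtain ⟨p, hp1, hp2⟩ := Option.map_eq_some_iff.1 (by
    rw [← List.head?_map]; exact hhd)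
  refine ⟨1, 1, (u,c) :: (-u,g₀) :: X ++ [(u,c⁻¹)], (X.map Prod.fst) ++ [u, -u], ?_, ?_, ?_⟩
  · have h1 : Chain' (Rr Λ B) ((u,c) :: (-u,g₀) :: (X ++ [(u,c⁻¹), (-u,1)])) := by
      unfold List.Chain'; rw [List.isChain_cons, List.isChain_cons]
      refine ⟨?_, ?_, ?_⟩
      · intro b hb
        simp [List.head?_append, hp1] at hb
        intro hmem; exact absurd hmem hc
      · intro b hb
        rw [List.head?_append, hp1] at hb
        simp at hb
        subst hb
        intro _; rw [hp2]
      · rw [List.isChain_append]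
        refine ⟨hch, ?_, ?_⟩
        · refine List.isChain_cons_cons.2 ⟨?_, List.isChain_singleton _⟩
          intro hmem
          exact absurd (inv_mem_iff.1 hmem) hc
        · intro a ha b hb
          simp at hb
          rw [hX, List.getLast?_append] at ha
          simp at ha
          subst ha hb
          intro _; rfl
    simpa [List.append_assoc] using h1
  · simp [hp2, List.append_assoc]
  · rw [← hp]
    simp only [wprod, ff, List.map_append, List.map_cons, List.prod_append, List.prod_cons,
      List.map_nil, List.prod_nil, Units.val_neg, map_one, map_inv]
    simp only [zpow_neg]
    group

theorem step_mem (u : ℤˣ) (n : ℕ) (hn : 1 ≤ n) {x : HNNExtension G Λ B θ}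
    (hx : x ∈ QS Λ B θ u n) :
    t ^ (u:ℤ) * x * (t ^ (u:ℤ))⁻¹ ∈ QS Λ B θ u (n + 1) := by
  obtain ⟨g₀, gk, l, rest, hch, hpat, hp⟩ := hx
  set X := l ++ [(-u, gk)] with hX
  obtain ⟨k, rfl⟩ := Nat.exists_eq_add_of_le hn
  have hhd : (X.map Prod.fst).head? = some u := by
    rw [hpat]; rw [Nat.add_comm]; simp [List.replicate_succ]
  obtain ⟨p, hp1, hp2⟩ := Option.map_eq_some_iff.1 (by rw [← List.head?_map]; exact hhd)
  refine ⟨1, 1, (u, g₀) :: X, rest ++ [-u], ?_, ?_, ?_⟩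
  · have h1 : Chain' (Rr Λ B) ((u, g₀) :: (X ++ [(-u, 1)])) := by
      unfold List.Chain'; rw [List.isChain_cons]
      refine ⟨?_, ?_⟩
      · intro b hb
        rw [List.head?_append, hp1] at hb
        simp at hb; subst hb
        intro _; rw [hp2]
      · rw [List.isChain_append]
        refine ⟨hch, List.isChain_singleton _, ?_⟩
        intro a ha b hb
        simp at hb
        rw [hX, List.getLast?_append] at ha
        simp at ha
        subst ha hb
        intro _; rfl
    simpa [List.append_assoc] using h1
  · have : ((u, g₀) :: X ++ [((-u : ℤˣ), (1 : G))]).map Prod.fst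
        = u :: (X.map Prod.fst) ++ [-u] := by simp
    rw [this, hpat]
    simp [List.replicate_succ, List.append_assoc]
  · rw [← hp]
    simp only [wprod, ff, List.map_append, List.map_cons, List.prod_append, List.prod_cons,
      List.map_nil, List.prod_nil, Units.val_neg, map_one, map_inv]
    simp only [zpow_neg]
    group

theorem iter_mem (u : ℤˣ) (c : G) (hc : c ∉ toSubgroup Λ B u) (n : ℕ)
    {x : HNNExtension G Λ B θ} (hx : x ∈ ES Λ B θ (-u) u univ univ) :
    ((t ^ (u:ℤ))^n * (t ^ (u:ℤ) * of c * t ^ (-(u:ℤ)))) * x *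
      ((t ^ (u:ℤ))^n * (t ^ (u:ℤ) * of c * t ^ (-(u:ℤ))))⁻¹ ∈ QS Λ B θ u (n+1) := by
  induction n with
  | zero => simpa using base_mem Λ B θ u c hc hx
  | succ n ih =>
    have h2 := step_mem Λ B θ u (n+1) (Nat.le_add_left 1 n) ih
    have e : ((t ^ (u:ℤ))^(n+1) * (t ^ (u:ℤ) * of c * t ^ (-(u:ℤ)))) * x *
        ((t ^ (u:ℤ))^(n+1) * (t ^ (u:ℤ) * of c * t ^ (-(u:ℤ))))⁻¹
        = t ^ (u:ℤ) * (((t ^ (u:ℤ))^n * (t ^ (u:ℤ) * of c * t ^ (-(u:ℤ)))) * x *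
          ((t ^ (u:ℤ))^n * (t ^ (u:ℤ) * of c * t ^ (-(u:ℤ))))⁻¹) * (t ^ (u:ℤ))⁻¹ := by
      rw [pow_succ']
      group
    rw [e]
    exact h2

theorem conjG_mem (ε δ : ℤˣ) (Hh Ht Hh' Ht' : Set G) (g : G)
    (hH : ∀ y ∈ Hh, g * y ∈ Hh') (hT : ∀ y ∈ Ht, y * g⁻¹ ∈ Ht')
    {x : HNNExtension G Λ B θ} (hx : x ∈ ES Λ B θ ε δ Hh Ht) :
    of g * x * (of g)⁻¹ ∈ ES Λ B θ ε δ Hh' Ht' := by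
  obtain ⟨g₀, gk, l, hch, hhd, h1, h2, hp⟩ := hx
  refine ⟨g * g₀, gk * g⁻¹, l, ?_, ?_, hH _ h1, hT _ h2, ?_⟩
  · unfold List.Chain' at hch ⊢; rw [List.isChain_append] at hch ⊢
    refine ⟨hch.1, List.isChain_singleton _, ?_⟩
    intro a ha b hb
    simp at hb
    subst hb
    exact hch.2.2 a ha (δ, gk) (by simp)
  · rw [show ((l ++ [(δ, gk * g⁻¹)]).map Prod.fst) = ((l ++ [(δ, gk)]).map Prod.fst) by simp]
    exact hhd
  · rw [← hp]
    simp only [wprod, ff, List.map_append, List.map_cons, List.prod_append, List.prod_cons,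
      List.map_nil, List.prod_nil, map_mul, map_inv]
    group

theorem conjT_neg_mem {x : HNNExtension G Λ B θ}
    (hx : x ∈ ES Λ B θ (-1) (-1) ((↑Λ : Set G)ᶜ) univ) :
    t * x * t⁻¹ ∈ ES Λ B θ 1 (-1) univ univ := by
  obtain ⟨g₀, gk, l, hch, hhd, h1, -, hp⟩ := hx
  set X := l ++ [((-1 : ℤˣ), gk)] with hX
  obtain ⟨p, hp1, hp2⟩ := Option.map_eq_some_iff.1 (by rw [← List.head?_map]; exact hhd)
  refine ⟨1, 1, (1, g₀) :: X, ?_, ?_, trivial, trivial, ?_⟩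
  · have hh : Chain' (Rr Λ B) ((1, g₀) :: (X ++ [((-1 : ℤˣ), (1:G))])) := by
      unfold List.Chain'; rw [List.isChain_cons]
      refine ⟨?_, ?_⟩
      · intro b hb
        rw [List.head?_append, hp1] at hb
        simp at hb; subst hb
        intro hmem; exact absurd hmem h1
      · rw [List.isChain_append]
        refine ⟨hch, List.isChain_singleton _, ?_⟩
        intro a ha b hb
        simp at hb
        rw [hX, List.getLast?_append] at ha
        simp at ha
        subst ha hb
        intro _; rfl
    simpa [List.append_assoc] using hh
  · simp
  · rw [← hp]
    simp only [wprod, ff, List.map_append, List.map_cons, List.prod_append, List.prod_cons,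
      List.map_nil, List.prod_nil, Units.val_neg, Units.val_one, map_one, map_inv]
    simp only [zpow_neg, zpow_one]
    group

theorem conjT_pos_mem {x : HNNExtension G Λ B θ}
    (hx : x ∈ ES Λ B θ 1 1 univ ((↑Λ : Set G)ᶜ)) :
    t * x * t⁻¹ ∈ ES Λ B θ 1 (-1) univ univ := by
  obtain ⟨g₀, gk, l, hch, hhd, -, h2, hp⟩ := hx
  set X := l ++ [((1 : ℤˣ), gk)] with hX
  obtain ⟨p, hp1, hp2⟩ := Option.map_eq_some_iff.1 (by rw [← List.head?_map]; exact hhd)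
  refine ⟨1, 1, (1, g₀) :: X, ?_, ?_, trivial, trivial, ?_⟩
  · have hh : Chain' (Rr Λ B) ((1, g₀) :: (X ++ [((-1 : ℤˣ), (1:G))])) := by
      unfold List.Chain'; rw [List.isChain_cons]
      refine ⟨?_, ?_⟩
      · intro b hb
        rw [List.head?_append, hp1] at hb
        simp at hb; subst hb
        intro _; rw [hp2]
      · rw [List.isChain_append]
        refine ⟨hch, List.isChain_singleton _, ?_⟩
        intro a ha b hb
        simp at hb
        rw [hX, List.getLast?_append] at ha
        simp at ha
        subst ha hb
        intro hmem; exact absurd hmem h2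
    simpa [List.append_assoc] using hh
  · simp
  · rw [← hp]
    simp only [wprod, ff, List.map_append, List.map_cons, List.prod_append, List.prod_cons,
      List.map_nil, List.prod_nil, Units.val_neg, Units.val_one, map_one, map_inv]
    simp only [zpow_neg, zpow_one]
    group

theorem base0_mem {x : HNNExtension G Λ B θ} (hx : x ∈ SG Λ B θ) :
    t * x * t⁻¹ ∈ QS0 Λ B θ 1 := by
  obtain ⟨g, hg, rfl⟩ := hx
  refine ⟨1, 1, [(1, g)], ?_, by simp, ?_⟩
  · refine List.isChain_cons_cons.2 ⟨?_, List.isChain_singleton _⟩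
    intro hmem; exact absurd hmem hg
  · simp only [wprod, ff, List.map_append, List.map_cons, List.prod_append, List.prod_cons,
      List.map_nil, List.prod_nil, Units.val_neg, Units.val_one, map_one]
    simp only [zpow_neg, zpow_one]
    group

theorem step0_mem (n : ℕ) (hn : 1 ≤ n) {x : HNNExtension G Λ B θ}
    (hx : x ∈ QS0 Λ B θ n) : t * x * t⁻¹ ∈ QS0 Λ B θ (n + 1) := by
  obtain ⟨g₀, gk, l, hch, hpat, hp⟩ := hx
  set X := l ++ [((-1 : ℤˣ), gk)] with hX
  obtain ⟨k, rfl⟩ := Nat.exists_eq_add_of_le hn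
  have hhd : (X.map Prod.fst).head? = some 1 := by
    rw [hpat, Nat.add_comm]; simp [List.replicate_succ]
  obtain ⟨p, hp1, hp2⟩ := Option.map_eq_some_iff.1 (by rw [← List.head?_map]; exact hhd)
  refine ⟨1, 1, (1, g₀) :: X, ?_, ?_, ?_⟩
  · have hh : Chain' (Rr Λ B) ((1, g₀) :: (X ++ [((-1 : ℤˣ), (1:G))])) := by
      unfold List.Chain'; rw [List.isChain_cons]
      refine ⟨?_, ?_⟩
      · intro b hb
        rw [List.head?_append, hp1] at hb
        simp at hb; subst hb
        intro _; rw [hp2]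
      · rw [List.isChain_append]
        refine ⟨hch, List.isChain_singleton _, ?_⟩
        intro a ha b hb
        simp at hb
        rw [hX, List.getLast?_append] at ha
        simp at ha
        subst ha hb
        intro _; rfl
    simpa [List.append_assoc] using hh
  · have : ((1, g₀) :: X ++ [((-1 : ℤˣ), (1 : G))]).map Prod.fst
        = 1 :: (X.map Prod.fst) ++ [-1] := by simp
    rw [this, hpat]
    simp [List.replicate_succ, ← List.replicate_succ' (n := 1 + k), List.append_assoc,
      List.replicate_succ']
  · rw [← hp]
    simp only [wprod, ff, List.map_append, List.map_cons, List.prod_append, List.prod_cons,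
      List.map_nil, List.prod_nil, Units.val_neg, Units.val_one, map_one]
    simp only [zpow_neg, zpow_one]
    group

theorem iter0_mem (n : ℕ) {x : HNNExtension G Λ B θ} (hx : x ∈ SG Λ B θ) :
    t^(n+1) * x * (t^(n+1))⁻¹ ∈ QS0 Λ B θ (n+1) := by
  induction n with
  | zero => simpa using base0_mem Λ B θ hx
  | succ n ih =>
    have h2 := step0_mem Λ B θ (n+1) (Nat.le_add_left 1 n) ih
    have e : (t^(n+1+1) : HNNExtension G Λ B θ) * x * (t^(n+1+1))⁻¹
        = t * (t^(n+1) * x * (t^(n+1))⁻¹) * t⁻¹ := by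
      rw [pow_succ']
      group
    rw [e]
    exact h2

end HNN
section Part2
open HNNExtension List Set

variable {G : Type*} [Group G] (Λ B : Subgroup G) (θ : Λ ≃* B)

theorem take_repl (n : ℕ) (u v : ℤˣ) (rest : List ℤˣ) :
    (replicate n u ++ v :: rest).take (n+1) = replicate n u ++ [v] := by
  have := List.take_length_add_append (l₁ := replicate n u) (l₂ := v :: rest) 1
  simpa using this

theorem take_disj (P : List ℤˣ) (u : ℤˣ) (i j : ℕ) (hij : i < j)
    (h1 : P.take (i+1) = replicate i u ++ [-u])
    (h2 : P.take (j+1) = replicate j u ++ [-u]) : False := by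
  have e1 : P[i]? = some (-u) := by
    have := List.getElem?_take (l := P) (i := i + 1) (j := i)
    rw [h1, if_pos (by omega)] at this
    rw [← this, List.getElem?_append_right (by simp)]
    simp
  have e2 : P[i]? = some u := by
    have := List.getElem?_take (l := P) (i := j + 1) (j := i)
    rw [h2, if_pos (by omega)] at this
    rw [← this, List.getElem?_append_left (by simpa using hij)]
    simp [hij]
  rw [e1] at e2
  have hne : u ≠ -u := by rcases Int.units_eq_one_or u with rfl | rfl <;> decide
  exact hne (by simpa using e2.symm)

variable {μ : Set (HNNExtension G Λ B θ) → ℝ}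
  (hone : μ ({1}ᶜ) = 1) (hsing : μ {1} = 0)
  (hpos : ∀ A : Set (HNNExtension G Λ B θ), 0 ≤ μ A)
  (hmono : ∀ A B' : Set (HNNExtension G Λ B θ), A ⊆ B' → μ A ≤ μ B')
  (hadd : ∀ A B' : Set (HNNExtension G Λ B θ), Disjoint A B' → μ (A ∪ B') = μ A + μ B')
  (hconj : ∀ (g : HNNExtension G Λ B θ) (A : Set (HNNExtension G Λ B θ)),
    μ ((fun x => g * x * g⁻¹) '' A) = μ A)

set_option linter.unusedSectionVars false

include hone hsing hpos hmono hadd hconj in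
theorem es_zero (u : ℤˣ) (c : G) (hc : c ∉ toSubgroup Λ B u) :
    μ (ES Λ B θ (-u) u univ univ) = 0 := by
  apply mean_zero_of_conj hone hsing hpos hmono hadd hconj _
    (fun n => {x | (Pat Λ B θ x).take (n+2) = replicate (n+1) u ++ [-u]})
  · intro n
    refine ⟨(t ^ (u:ℤ))^n * (t ^ (u:ℤ) * of c * t ^ (-(u:ℤ))), ?_⟩
    rintro y ⟨x, hx, rfl⟩
    obtain ⟨g₀, gk, l, rest, hch, hpat, hp⟩ := iter_mem Λ B θ u c hc n hx
    have hP := pat_eq Λ B θ g₀ _ hch hp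
    simp only [Set.mem_setOf_eq, ← hP, hpat]
    exact take_repl (n+1) u (-u) rest
  · intro i j hij
    rw [Set.disjoint_left]
    intro x h1 h2
    rcases Nat.lt_or_ge i j with h | h
    · exact take_disj _ u (i+1) (j+1) (by omega) h1 h2
    · exact take_disj _ u (j+1) (i+1) (by omega) h2 h1

include hone hsing hpos hmono hadd hconj in
theorem sg_zero : μ (SG Λ B θ) = 0 := by
  apply mean_zero_of_conj hone hsing hpos hmono hadd hconj _
    (fun n => {x | (Pat Λ B θ x).length = 2*n})
  · intro n
    match n with
    | 0 =>
      refine ⟨1, ?_⟩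
      rintro y ⟨x, hx, rfl⟩
      obtain ⟨g, hg, rfl⟩ := hx
      have hP := pat_eq Λ B θ (x := of g) g [] (List.isChain_nil) (by simp [wprod])
      simp only [Set.mem_setOf_eq]
      simp only [List.map_nil] at hP
      have : (1 : HNNExtension G Λ B θ) * of g * 1⁻¹ = of g := by group
      rw [this, ← hP]
      simp
    | (n+1) =>
      refine ⟨t^(n+1), ?_⟩
      rintro y ⟨x, hx, rfl⟩
      obtain ⟨g₀, gk, l, hch, hpat, hp⟩ := iter0_mem Λ B θ n hx
      have hP := pat_eq Λ B θ g₀ _ hch hp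
      simp only [Set.mem_setOf_eq, ← hP, hpat]
      simp; omega
  · intro i j hij
    rw [Set.disjoint_left]
    intro x h1 h2
    simp only [Set.mem_setOf_eq] at h1 h2
    omega

end Part2
section Part3
open HNNExtension List Set

variable {G : Type*} [Group G] (Λ B : Subgroup G) (θ : Λ ≃* B)

theorem cover (x : HNNExtension G Λ B θ) (hx : x ≠ 1) :
    x ∈ ((of '' (↑Λ) \ {1}) : Set (HNNExtension G Λ B θ)) ∪
      (SG Λ B θ ∪ (ES Λ B θ 1 (-1) univ univ ∪ (ES Λ B θ (-1) 1 univ univ ∪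
      (ES Λ B θ (-1) (-1) ((↑Λ : Set G)ᶜ) univ ∪ (ES Λ B θ (-1) (-1) (↑Λ : Set G) univ ∪
      (ES Λ B θ 1 1 univ ((↑Λ : Set G)ᶜ) ∪ ES Λ B θ 1 1 univ (↑Λ : Set G))))))) := by
  set W := (NormalWord.equiv θ (dd Λ B) x).toReducedWord with hW
  have h2 : wprod Λ B θ W.head W.toList = x :=
    (NormalWord.equiv θ (dd Λ B)).symm_apply_apply x
  have hch : W.toList.Chain' (Rr Λ B) := W.chain
  rcases eq_or_ne W.toList [] with hl | hl
  · rw [hl] at h2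
    simp only [wprod, List.map_nil, List.prod_nil, mul_one] at h2
    by_cases hmem : W.head ∈ Λ
    · exact Or.inl ⟨⟨W.head, hmem, h2⟩, by simpa [h2] using hx⟩
    · exact Or.inr (Or.inl ⟨W.head, hmem, h2⟩)
  · have hsplit : W.toList.dropLast ++ [W.toList.getLast hl] = W.toList :=
      List.dropLast_append_getLast hl
    set p := W.toList.getLast hl with hp
    set l₀ := W.toList.dropLast with hl₀
    have hhd : ((l₀ ++ [(p.1, p.2)]).map Prod.fst).head? = some ((W.toList.head hl).1) := by
      rw [Prod.mk.eta, hsplit, List.head?_map, List.head?_eq_head hl]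
      rfl
    have hch' : Chain' (Rr Λ B) (l₀ ++ [(p.1, p.2)]) := by
      rw [Prod.mk.eta, hsplit]; exact hch
    have hprod : wprod Λ B θ W.head (l₀ ++ [(p.1, p.2)]) = x := by
      rw [Prod.mk.eta, hsplit]; exact h2
    rcases Int.units_eq_one_or (W.toList.head hl).1 with hε | hε <;>
      rcases Int.units_eq_one_or p.1 with hδ | hδ
    · -- ε = 1, δ = 1
      by_cases hmem : p.2 ∈ Λ
      · refine Or.inr (Or.inr (Or.inr (Or.inr (Or.inr (Or.inr (Or.inr
          ⟨W.head, p.2, l₀, ?_, ?_, trivial, hmem, ?_⟩))))))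
        · rw [← hδ]; exact hch'
        · conv_lhs => rw [← hδ]
          rw [hhd, hε]
        · rw [← hδ]; exact hprod
      · refine Or.inr (Or.inr (Or.inr (Or.inr (Or.inr (Or.inr (Or.inl
          ⟨W.head, p.2, l₀, ?_, ?_, trivial, hmem, ?_⟩))))))
        · rw [← hδ]; exact hch'
        · conv_lhs => rw [← hδ]
          rw [hhd, hε]
        · rw [← hδ]; exact hprod
    · -- ε = 1, δ = -1
      refine Or.inr (Or.inr (Or.inl ⟨W.head, p.2, l₀, ?_, ?_, trivial, trivial, ?_⟩))
      · rw [← hδ]; exact hch'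
      · conv_lhs => rw [← hδ]
        rw [hhd, hε]
      · rw [← hδ]; exact hprod
    · -- ε = -1, δ = 1
      refine Or.inr (Or.inr (Or.inr (Or.inl ⟨W.head, p.2, l₀, ?_, ?_, trivial, trivial, ?_⟩)))
      · rw [← hδ]; exact hch'
      · conv_lhs => rw [← hδ]
        rw [hhd, hε]
      · rw [← hδ]; exact hprod
    · -- ε = -1, δ = -1
      by_cases hmem : W.head ∈ Λ
      · refine Or.inr (Or.inr (Or.inr (Or.inr (Or.inr (Or.inl
          ⟨W.head, p.2, l₀, ?_, ?_, hmem, trivial, ?_⟩)))))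
        · rw [← hδ]; exact hch'
        · conv_lhs => rw [← hδ]
          rw [hhd, hε]
        · rw [← hδ]; exact hprod
      · refine Or.inr (Or.inr (Or.inr (Or.inr (Or.inl
          ⟨W.head, p.2, l₀, ?_, ?_, hmem, trivial, ?_⟩))))
        · rw [← hδ]; exact hch'
        · conv_lhs => rw [← hδ]
          rw [hhd, hε]
        · rw [← hδ]; exact hprod

end Part3


open HNNExtension Set

/-- A group `Γ` is inner amenable if there is a conjugation-invariant finitely additive
probability measure on `Γ \ {e}` (extended by `0` on `{e}`). -/
def InnerAmenable (Γ : Type*) [Group Γ] : Prop :=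
  ∃ m : Set Γ → ℝ,
    m ({1}ᶜ) = 1 ∧
    m {1} = 0 ∧
    (∀ A : Set Γ, 0 ≤ m A) ∧
    (∀ A B : Set Γ, A ⊆ B → m A ≤ m B) ∧
    (∀ A B : Set Γ, Disjoint A B → m (A ∪ B) = m A + m B) ∧
    (∀ (g : Γ) (A : Set Γ), m ((fun x => g * x * g⁻¹) '' A) = m A)

/-- Lemma 8.2(1): if `Λ ≠ G`, `θ(Λ) ≠ G` and some finite intersection of conjugates of `Λ`
in the HNN extension `Γ = HNN(G, Λ, θ)` is trivial, then `Γ` is not inner amenable. -/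
theorem stmt0 {G : Type*} [Group G] [Countable G] (Λ B : Subgroup G) (θ : Λ ≃* B)
    (hΛ : Λ ≠ ⊤) (hB : B ≠ ⊤)
    (m : ℕ) (hm : 1 ≤ m) (h : Fin m → HNNExtension G Λ B θ)
    (hcore : (⨅ i : Fin m, Subgroup.map (MulAut.conj (h i)).toMonoidHom
        (Λ.map (HNNExtension.of : G →* HNNExtension G Λ B θ))) = ⊥) :
    ¬ InnerAmenable (HNNExtension G Λ B θ) := by
  rintro ⟨μ, hone, hsing, hpos, hmono, hadd, hconj⟩
  obtain ⟨a, ha⟩ : ∃ a : G, a ∉ Λ := by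
    by_contra hcon; push_neg at hcon; exact hΛ ((Subgroup.eq_top_iff' Λ).2 hcon)
  obtain ⟨b, hb⟩ : ∃ b : G, b ∉ B := by
    by_contra hcon; push_neg at hcon; exact hB ((Subgroup.eq_top_iff' B).2 hcon)
  have hb' : b ∉ toSubgroup Λ B (-1) := by rw [toSubgroup_neg_one]; exact hb
  have ha' : a ∉ toSubgroup Λ B 1 := by rw [toSubgroup_one]; exact ha
  -- the six measure-zero pieces
  have hz1 : μ (ES Λ B θ 1 (-1) univ univ) = 0 := by
    have := es_zero Λ B θ hone hsing hpos hmono hadd hconj (-1) b hb'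
    simpa using this
  have hz2 : μ (ES Λ B θ (-1) 1 univ univ) = 0 := by
    have := es_zero Λ B θ hone hsing hpos hmono hadd hconj 1 a ha'
    simpa using this
  have hz0 : μ (SG Λ B θ) = 0 := sg_zero Λ B θ hone hsing hpos hmono hadd hconj
  have hz3 : μ (ES Λ B θ (-1) (-1) ((↑Λ : Set G)ᶜ) univ) = 0 :=
    mean_zero_of_conj_subset hpos hmono hconj t
      (fun x hx => conjT_neg_mem Λ B θ hx) hz1
  have hz4 : μ (ES Λ B θ (-1) (-1) (↑Λ : Set G) univ) = 0 :=
    mean_zero_of_conj_subset hpos hmono hconj (of a)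
      (fun x hx => conjG_mem Λ B θ (-1) (-1) (↑Λ : Set G) univ ((↑Λ : Set G)ᶜ) univ a
        (fun y hy hmem => ha (by
          have : (a * y) * y⁻¹ ∈ Λ := mul_mem hmem (inv_mem hy)
          simpa using this))
        (fun y _ => trivial) hx) hz3
  have hz5 : μ (ES Λ B θ 1 1 univ ((↑Λ : Set G)ᶜ)) = 0 :=
    mean_zero_of_conj_subset hpos hmono hconj t
      (fun x hx => conjT_pos_mem Λ B θ hx) hz1
  have hz6 : μ (ES Λ B θ 1 1 univ (↑Λ : Set G)) = 0 :=
    mean_zero_of_conj_subset hpos hmono hconj (of a)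
      (fun x hx => conjG_mem Λ B θ 1 1 univ (↑Λ : Set G) univ ((↑Λ : Set G)ᶜ) a
        (fun y _ => trivial)
        (fun y hy hmem => ha (by
          have : (y⁻¹ : G) * (y * a⁻¹) ∈ Λ := mul_mem (inv_mem hy) hmem
          simpa using inv_mem this)) hx) hz5
  -- the union of the zero pieces
  set Z : Set (HNNExtension G Λ B θ) :=
    SG Λ B θ ∪ (ES Λ B θ 1 (-1) univ univ ∪ (ES Λ B θ (-1) 1 univ univ ∪
      (ES Λ B θ (-1) (-1) ((↑Λ : Set G)ᶜ) univ ∪ (ES Λ B θ (-1) (-1) (↑Λ : Set G) univ ∪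
      (ES Λ B θ 1 1 univ ((↑Λ : Set G)ᶜ) ∪ ES Λ B θ 1 1 univ (↑Λ : Set G)))))) with hZdef
  have hZ : μ Z = 0 := by
    apply mean_union_zero hpos hmono hadd hz0
    apply mean_union_zero hpos hmono hadd hz1
    apply mean_union_zero hpos hmono hadd hz2
    apply mean_union_zero hpos hmono hadd hz3
    apply mean_union_zero hpos hmono hadd hz4
    exact mean_union_zero hpos hmono hadd hz5 hz6
  set K : Set (HNNExtension G Λ B θ) := of '' ↑Λ with hKdef
  have hcov : ({1}ᶜ : Set (HNNExtension G Λ B θ)) ⊆ (K \ {1}) ∪ Z := by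
    intro x hx
    exact cover Λ B θ x hx
  have hK1 : μ (K \ {1}) = 1 := by
    have hle : μ ({1}ᶜ : Set (HNNExtension G Λ B θ)) ≤ μ ((K \ {1}) ∪ Z) := hmono _ _ hcov
    have h2 := mean_union_le hmono hadd (K \ {1}) Z
    have hub : μ (K \ {1}) ≤ 1 := by
      rw [← mean_univ hone hsing hadd]
      exact hmono _ _ (subset_univ _)
    rw [hone] at hle
    rw [hZ] at h2
    linarith
  -- conjugates of K \ {1}
  set C : Fin m → Set (HNNExtension G Λ B θ) :=
    fun i => (fun x => h i * x * (h i)⁻¹) '' (K \ {1}) with hCdef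
  have hCμ : ∀ i, μ (C i) = 1 := by
    intro i
    rw [hCdef]
    simp only
    rw [hconj]
    exact hK1
  have hCc : ∀ i, μ ((C i)ᶜ) = 0 := by
    intro i
    have h2 := hadd (C i) ((C i)ᶜ) disjoint_compl_right
    rw [union_compl_self, mean_univ hone hsing hadd, hCμ i] at h2
    linarith
  have hcup : (univ : Set (HNNExtension G Λ B θ)) ⊆
      ⋃ i ∈ (Finset.univ : Finset (Fin m)), (C i)ᶜ := by
    intro x _
    by_contra hcon
    simp only [Set.mem_iUnion, Finset.mem_univ, exists_prop, true_and, not_exists,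
      Set.notMem_compl_iff] at hcon
    have hx1 : x ≠ 1 := by
      obtain ⟨y, hy, hxy⟩ := hcon ⟨0, hm⟩
      intro hx1
      apply hy.2
      have hy1 : y = (h ⟨0, hm⟩)⁻¹ * x * (h ⟨0, hm⟩) := by rw [← hxy]; group
      rw [hx1] at hy1
      simp only [mul_one, inv_mul_cancel] at hy1
      simp [hy1]
    have hxmem : x ∈ (⨅ i : Fin m, Subgroup.map (MulAut.conj (h i)).toMonoidHom
        (Λ.map (HNNExtension.of : G →* HNNExtension G Λ B θ))) := by
      rw [Subgroup.mem_iInf]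
      intro i
      obtain ⟨y, hy, hxy⟩ := hcon i
      obtain ⟨g, hgΛ, rfl⟩ := hy.1
      refine Subgroup.mem_map.2 ⟨of g, Subgroup.mem_map.2 ⟨g, hgΛ, rfl⟩, ?_⟩
      simpa [MulAut.conj] using hxy
    rw [hcore] at hxmem
    exact hx1 (Subgroup.mem_bot.1 hxmem)
  have hfin : μ univ ≤ ∑ i ∈ (Finset.univ : Finset (Fin m)), μ ((C i)ᶜ) :=
    le_trans (hmono _ _ hcup) (mean_biUnion_le hmono hadd _ _)
  rw [mean_univ hone hsing hadd] at hfin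
  simp only [hCc, Finset.sum_const_zero] at hfin
  linarith
end

section
/- Let G be a countable group, Λ < G a subgroup, and θ : Λ → G an injective homomorphism with Λ ≠ G and θ(Λ) ≠ G, and let Γ = HNN(G, Λ, θ). Then Λ is not co-amenable in Γ; i.e., there is no Γ-invariant finitely additive probability measure on the coset space Γ/Λ. -/
/-- A subgroup `Λ` of `Γ` is co-amenable if there is a `Γ`-invariant finitely additive
probability measure on the left coset space `Γ/Λ`. -/
def CoAmenable {Γ : Type*} [Group Γ] (Λ : Subgroup Γ) : Prop :=
  ∃ m : Set (Γ ⧸ Λ) → ℝ,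
    m Set.univ = 1 ∧
    (∀ A : Set (Γ ⧸ Λ), 0 ≤ m A) ∧
    (∀ A B : Set (Γ ⧸ Λ), A ⊆ B → m A ≤ m B) ∧
    (∀ A B : Set (Γ ⧸ Λ), Disjoint A B → m (A ∪ B) = m A + m B) ∧
    (∀ (g : Γ) (A : Set (Γ ⧸ Λ)), m ((fun x => g • x) '' A) = m A)

namespace HNNAux

open HNNExtension HNNExtension.NormalWord

variable {G : Type*} [Group G] {Λ B : Subgroup G} (θ : Λ ≃* B)

/-- The predicate on `γ ∈ HNN(G,Λ,θ)`: a reduced word for `γ` starts with a `t⁻¹`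
and its head lies in `Λ`. -/
def Q (γ : HNNExtension G Λ B θ) : Prop :=
  ∃ w : ReducedWord G Λ B, w.prod θ = γ ∧
    w.toList.head?.map Prod.fst = some (-1) ∧ w.head ∈ Λ

/-- Every element is the product of some reduced word. -/
theorem exists_red (γ : HNNExtension G Λ B θ) :
    ∃ w : ReducedWord G Λ B, w.prod θ = γ := by
  rcases NormalWord.TransversalPair.nonempty G Λ B with ⟨d⟩
  exact ⟨(NormalWord.equiv θ d γ).toReducedWord,
    (NormalWord.equiv θ d).symm_apply_apply γ⟩

/-- The properties defining `Q` hold for *every* reduced word representing `γ`. -/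
theorem Q_spec {γ : HNNExtension G Λ B θ} (hγ : Q θ γ) (w : ReducedWord G Λ B)
    (hw : w.prod θ = γ) :
    w.toList.head?.map Prod.fst = some (-1) ∧ w.head ∈ Λ := by
  obtain ⟨w₀, hw₀, hfst, hhead⟩ := hγ
  have hprod : w.prod θ = w₀.prod θ := hw.trans hw₀.symm
  obtain ⟨h1, h2⟩ := ReducedWord.map_fst_eq_and_of_prod_eq θ hprod
  have hfst' : w.toList.head?.map Prod.fst = some (-1) := by
    rw [← List.head?_map, h1, List.head?_map, hfst]
  refine ⟨hfst', ?_⟩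
  have hmem := h2 (-1) (by rw [hfst']; simp)
  rw [neg_neg, toSubgroup_one] at hmem
  have : w.head = w₀.head * (w.head⁻¹ * w₀.head)⁻¹ := by group
  rw [this]
  exact mul_mem hhead (inv_mem hmem)

/-- `Q` is invariant under right multiplication by elements of `of '' Λ`. -/
theorem Q_mul_of {γ : HNNExtension G Λ B θ} (hγ : Q θ γ) {l : G} (hl : l ∈ Λ) :
    Q θ (γ * of l) := by
  obtain ⟨w, hw, hfst, hhead⟩ := hγ
  rcases List.eq_nil_or_concat w.toList with hnil | ⟨L, ⟨u, g⟩, hL⟩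
  · rw [hnil] at hfst; simp at hfst
  · rw [List.concat_eq_append] at hL
    have hchain := w.chain
    rw [hL] at hchain hfst
    have hchain' : (L ++ [(u, g * l)]).Chain'
        (fun a b => a.2 ∈ toSubgroup Λ B a.1 → a.1 = b.1) := by
      unfold List.Chain'
      rw [List.isChain_append] at hchain ⊢
      refine ⟨hchain.1, List.isChain_singleton _, ?_⟩
      intro x hx y hy
      simp only [List.head?_cons, Option.mem_some_iff] at hy
      subst hy
      exact fun h => hchain.2.2 x hx (u, g) (by simp) h
    refine ⟨⟨w.head, L ++ [(u, g * l)], hchain'⟩, ?_, ?_, hhead⟩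
    · rw [← hw]
      have : w.prod θ = of w.head *
          ((L.map (fun x => t ^ (x.1 : ℤ) * of x.2)).prod * (t ^ (u : ℤ) * of g)) := by
        rw [ReducedWord.prod, hL]
        simp [mul_assoc]
      rw [this, ReducedWord.prod]
      simp [mul_assoc, map_mul]
    · rw [← List.head?_map] at hfst ⊢
      simpa using hfst

/-- Prepending `t⁻¹ g`: if the chain condition is satisfied at the junction,
then `t⁻¹ * of g * w.prod` satisfies `Q`. -/
theorem Q_tinv_mul (g : G) (w : ReducedWord G Λ B)
    (hc : ∀ u' ∈ w.toList.head?.map Prod.fst, g * w.head ∈ B → (-1 : ℤˣ) = u') :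
    Q θ (t⁻¹ * (of g * w.prod θ)) := by
  have hchain : ((((-1 : ℤˣ), g * w.head)) :: w.toList).Chain'
      (fun a b => a.2 ∈ toSubgroup Λ B a.1 → a.1 = b.1) := by
    unfold List.Chain'
    rw [List.isChain_cons]
    refine ⟨?_, w.chain⟩
    intro y hy hmem
    exact hc y.1 (Option.mem_map_of_mem _ hy) hmem
  refine ⟨⟨1, ((-1 : ℤˣ), g * w.head) :: w.toList, hchain⟩, ?_, by simp, one_mem _⟩
  rw [ReducedWord.prod, ReducedWord.prod]
  simp [mul_assoc, map_mul]

end HNNAux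

namespace HNNAux

open HNNExtension HNNExtension.NormalWord

variable {G : Type*} [Group G] {Λ B : Subgroup G} (θ : Λ ≃* B)

/-- `Q` descends to the quotient by the image of `Λ`. -/
theorem Q_of_mk_eq {γ γ' : HNNExtension G Λ B θ}
    (h : QuotientGroup.mk (s := Λ.map (of : G →* HNNExtension G Λ B θ)) γ =
      QuotientGroup.mk γ') (hQ : Q θ γ) : Q θ γ' := by
  rw [QuotientGroup.eq] at h
  obtain ⟨l, hl, hl'⟩ := h
  have : γ' = γ * of l := by rw [hl']; group
  exact this ▸ Q_mul_of θ hQ hl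

end HNNAux

open HNNExtension HNNExtension.NormalWord HNNAux in
/-- Lemma 8.2(2): if `Λ ≠ G` and `θ(Λ) ≠ G`, then `Λ` is not co-amenable in the
HNN extension `Γ = HNN(G, Λ, θ)`. -/
theorem stmt1 {G : Type*} [Group G] [Countable G] (Λ B : Subgroup G) (θ : Λ ≃* B)
    (hΛ : Λ ≠ ⊤) (hB : B ≠ ⊤) :
    ¬ CoAmenable (Λ.map (HNNExtension.of : G →* HNNExtension G Λ B θ)) := by
  rintro ⟨m, h1, h0, hmono, hadd, hinv⟩
  obtain ⟨x, hx⟩ : ∃ x : G, x ∉ Λ := by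
    by_contra h; push_neg at h; exact hΛ ((Subgroup.eq_top_iff' _).2 h)
  obtain ⟨y, hy⟩ : ∃ y : G, y ∉ B := by
    by_contra h; push_neg at h; exact hB ((Subgroup.eq_top_iff' _).2 h)
  set A : Set (HNNExtension G Λ B θ ⧸
      Λ.map (HNNExtension.of : G →* HNNExtension G Λ B θ)) :=
    {c | ∃ γ : HNNExtension G Λ B θ, QuotientGroup.mk γ = c ∧ Q θ γ} with hA
  have memA : ∀ γ : HNNExtension G Λ B θ,
      (QuotientGroup.mk γ : HNNExtension G Λ B θ ⧸
        Λ.map (HNNExtension.of : G →* HNNExtension G Λ B θ)) ∈ A ↔ Q θ γ := by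
    intro γ
    constructor
    · rintro ⟨γ₀, hmk, hQ⟩
      exact Q_of_mk_eq θ hmk hQ
    · intro hQ
      exact ⟨γ, rfl, hQ⟩
  -- the two contracting translates of `A`
  have hsub : ∀ g : G,
      ((fun c => (t⁻¹ * HNNExtension.of g : HNNExtension G Λ B θ) • c) '' A) ⊆ A := by
    rintro g _ ⟨c, hc, rfl⟩
    obtain ⟨γ, rfl, hQ⟩ := hc
    refine (memA (t⁻¹ * HNNExtension.of g * γ)).2 ?_
    obtain ⟨w, hw, hfst, hhead⟩ := hQ
    have := Q_tinv_mul θ g w (by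
      intro u' hu' _
      rw [hfst] at hu'
      simp_all)
    rw [hw] at this
    rwa [mul_assoc]
  -- disjointness of the two translates
  have hdisj : Disjoint
      ((fun c => (t⁻¹ * HNNExtension.of 1 : HNNExtension G Λ B θ) • c) '' A)
      ((fun c => (t⁻¹ * HNNExtension.of x⁻¹ : HNNExtension G Λ B θ) • c) '' A) := by
    rw [Set.disjoint_left]
    rintro _ ⟨c₁, hc₁, rfl⟩ ⟨c₂, hc₂, hc₂'⟩
    obtain ⟨γ₁, rfl, hQ₁⟩ := hc₁
    obtain ⟨γ₂, rfl, hQ₂⟩ := hc₂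
    have hc₂'' : (QuotientGroup.mk (t⁻¹ * HNNExtension.of x⁻¹ * γ₂) :
        HNNExtension G Λ B θ ⧸ Λ.map (HNNExtension.of : G →* HNNExtension G Λ B θ)) =
        QuotientGroup.mk (t⁻¹ * HNNExtension.of 1 * γ₁) := hc₂'
    have hmk : (QuotientGroup.mk (HNNExtension.of x * γ₁) :
        HNNExtension G Λ B θ ⧸ Λ.map (HNNExtension.of : G →* HNNExtension G Λ B θ)) =
        QuotientGroup.mk γ₂ := by
      rw [QuotientGroup.eq] at hc₂'' ⊢
      have heq : (HNNExtension.of x * γ₁)⁻¹ * γ₂ =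
          ((t⁻¹ * HNNExtension.of x⁻¹ * γ₂)⁻¹ * (t⁻¹ * HNNExtension.of 1 * γ₁))⁻¹ := by
        rw [map_inv, map_one]
        group
      rw [heq]
      exact inv_mem hc₂''
    have hQx : Q θ (HNNExtension.of x * γ₁) := Q_of_mk_eq θ hmk.symm hQ₂
    obtain ⟨w, hw, hfst, hhead⟩ := hQ₁
    have hprod : (⟨x * w.head, w.toList, w.chain⟩ : ReducedWord G Λ B).prod θ =
        HNNExtension.of x * γ₁ := by
      rw [← hw, ReducedWord.prod, ReducedWord.prod]
      simp [map_mul, mul_assoc]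
    have := (Q_spec θ hQx _ hprod).2
    exact hx (by simpa using mul_mem this (Subgroup.inv_mem _ hhead) :)
  -- the covering by two translates of `A`
  have hcover : (Set.univ : Set (HNNExtension G Λ B θ ⧸
        Λ.map (HNNExtension.of : G →* HNNExtension G Λ B θ))) ⊆
      ((fun c => (t : HNNExtension G Λ B θ) • c) '' A) ∪
      ((fun c => (HNNExtension.of y * t : HNNExtension G Λ B θ) • c) '' A) := by
    rintro c -
    obtain ⟨γ, rfl⟩ := QuotientGroup.mk_surjective c
    obtain ⟨w, hw⟩ := exists_red θ γ
    have hleft : ∀ _ : Q θ (t⁻¹ * γ),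
        (QuotientGroup.mk γ : HNNExtension G Λ B θ ⧸
          Λ.map (HNNExtension.of : G →* HNNExtension G Λ B θ)) ∈
          ((fun c => (t : HNNExtension G Λ B θ) • c) '' A) ∪
          ((fun c => (HNNExtension.of y * t : HNNExtension G Λ B θ) • c) '' A) := by
      intro hQ'
      left
      refine ⟨QuotientGroup.mk (t⁻¹ * γ), (memA _).2 hQ', ?_⟩
      show (QuotientGroup.mk (t * (t⁻¹ * γ)) : HNNExtension G Λ B θ ⧸
        Λ.map (HNNExtension.of : G →* HNNExtension G Λ B θ)) = QuotientGroup.mk γ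
      rw [mul_inv_cancel_left]
    rcases ho : w.toList.head?.map Prod.fst with - | u
    · refine hleft ?_
      have := Q_tinv_mul θ 1 w (by intro u' hu' _; rw [ho] at hu'; simp at hu')
      rwa [map_one, one_mul, hw] at this
    · rcases Int.units_eq_one_or u with rfl | rfl
      · by_cases hwB : w.head ∈ B
        · right
          have hQ' : Q θ ((HNNExtension.of y * t)⁻¹ * γ) := by
            have hQ'' := Q_tinv_mul θ y⁻¹ w (by
              intro u' hu' hmem
              have hyB : y⁻¹ ∈ B := by simpa using mul_mem hmem (inv_mem hwB)
              exact absurd (by simpa using inv_mem hyB) hy)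
            have heq : t⁻¹ * (HNNExtension.of y⁻¹ * w.prod θ) =
                (HNNExtension.of y * t : HNNExtension G Λ B θ)⁻¹ * γ := by
              rw [map_inv, hw]
              group
            rwa [heq] at hQ''
          refine ⟨QuotientGroup.mk ((HNNExtension.of y * t)⁻¹ * γ), (memA _).2 hQ', ?_⟩
          show (QuotientGroup.mk ((HNNExtension.of y * t) * ((HNNExtension.of y * t)⁻¹ * γ)) :
            HNNExtension G Λ B θ ⧸
              Λ.map (HNNExtension.of : G →* HNNExtension G Λ B θ)) = QuotientGroup.mk γ
          rw [mul_inv_cancel_left]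
        · refine hleft ?_
          have := Q_tinv_mul θ 1 w (by
            intro u' hu' hmem
            exact absurd (by simpa using hmem) hwB)
          rwa [map_one, one_mul, hw] at this
      · refine hleft ?_
        have := Q_tinv_mul θ 1 w (by
          intro u' hu' _
          rw [ho] at hu'
          simp_all)
        rwa [map_one, one_mul, hw] at this
  -- subadditivity
  have hsubadd : ∀ S T : Set (HNNExtension G Λ B θ ⧸
      Λ.map (HNNExtension.of : G →* HNNExtension G Λ B θ)), m (S ∪ T) ≤ m S + m T := by
    intro S T
    rw [← Set.union_diff_self, hadd _ _ Set.disjoint_sdiff_right]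
    exact add_le_add le_rfl (hmono _ _ Set.diff_subset)
  -- m A = 0
  have hmA0 : m A ≤ 0 := by
    have hu := hadd _ _ hdisj
    rw [hinv, hinv] at hu
    have hle := hmono _ _ (Set.union_subset (hsub 1) (hsub x⁻¹))
    rw [hu] at hle
    linarith
  have hge : (1 : ℝ) ≤ m A + m A := by
    have h2 := hmono _ _ hcover
    rw [h1] at h2
    have h3 := hsubadd ((fun c => (t : HNNExtension G Λ B θ) • c) '' A)
      ((fun c => (HNNExtension.of y * t : HNNExtension G Λ B θ) • c) '' A)
    rw [hinv, hinv] at h3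
    linarith
  linarith
end

section
/- Let a group Γ act on a set X, let m be a Γ-invariant finitely additive probability measure on the subsets of X, and let S, U, V ⊆ X. Suppose there are g₁, g₂, g₃, g₄ ∈ Γ with g₁·S ⊆ U, g₂·S ⊆ V, g₃·U ⊆ S, g₄·V ⊆ S, and (g₃·U) ∩ (g₄·V) = ∅. Then m(S) = m(U) = m(V) = 0. -/
/-- Abstract ping-pong lemma for invariant finitely additive probability measures:
if `g₁·S ⊆ U`, `g₂·S ⊆ V`, `g₃·U ⊆ S`, `g₄·V ⊆ S` and `g₃·U`, `g₄·V` are disjoint,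
then `m S = m U = m V = 0`. -/
theorem stmt2 {Γ X : Type*} [Group Γ] [MulAction Γ X]
    (m : Set X → ℝ)
    (h_total : m Set.univ = 1)
    (h_nonneg : ∀ A : Set X, 0 ≤ m A)
    (h_mono : ∀ A B : Set X, A ⊆ B → m A ≤ m B)
    (h_add : ∀ A B : Set X, Disjoint A B → m (A ∪ B) = m A + m B)
    (h_inv : ∀ (g : Γ) (A : Set X), m ((fun x => g • x) '' A) = m A)
    (S U V : Set X) (g₁ g₂ g₃ g₄ : Γ)
    (h1 : (fun x => g₁ • x) '' S ⊆ U)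
    (h2 : (fun x => g₂ • x) '' S ⊆ V)
    (h3 : (fun x => g₃ • x) '' U ⊆ S)
    (h4 : (fun x => g₄ • x) '' V ⊆ S)
    (hdisj : Disjoint ((fun x => g₃ • x) '' U) ((fun x => g₄ • x) '' V)) :
    m S = 0 ∧ m U = 0 ∧ m V = 0 := by
  have hSU : m S ≤ m U := by
    have := h_mono _ _ h1
    rwa [h_inv g₁ S] at this
  have hSV : m S ≤ m V := by
    have := h_mono _ _ h2
    rwa [h_inv g₂ S] at this
  have hsum : m U + m V ≤ m S := by
    have h := h_add _ _ hdisj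
    rw [h_inv g₃ U, h_inv g₄ V] at h
    rw [← h]
    exact h_mono _ _ (Set.union_subset h3 h4)
  have hS0 : m S = 0 := by
    have : m S + m S ≤ m S := le_trans (add_le_add hSU hSV) hsum
    have := h_nonneg S
    linarith
  refine ⟨hS0, ?_, ?_⟩ <;>
    [skip; skip] <;>
    · have hU := h_nonneg U
      have hV := h_nonneg V
      linarith [hsum, hS0]
end

section
/- Let Γ = HNN(G, Λ, θ) with stable letter t, where Λ ≠ G. Define a map b : Γ → ℂ(Γ/Λ) (finitely supported functions on Γ/Λ) by b(g) = 0 for g ∈ G and b(t) = δ_{tΛ}, extended by the cocycle identity b(gh) = b(g) + g·b(h) for the quasi-regular action of Γ on Γ/Λ. Then b is a well-defined cocycle, and for every g ∈ G \ Λ and n ≥ 1, b((gt)ⁿ) = Σ_{k=0}^{n-1} δ_{(gt)^k g t Λ} is a sum of n distinct basis vectors, so ‖b((gt)ⁿ)‖_{ℓ²} = √n; in particular b is unbounded. -/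
open HNNExtension

namespace Stmt6Aux

variable {G : Type*} [Group G] (A B : Subgroup G) (φ : A ≃* B)

abbrev Q := HNNExtension G A B φ ⧸ A.map (of : G →* HNNExtension G A B φ)

noncomputable def act : HNNExtension G A B φ →* MulAut (Multiplicative (Q A B φ →₀ ℂ)) :=
  MonoidHom.mk' (fun g => AddEquiv.toMultiplicative
    ((Finsupp.domCongr (MulAction.toPerm g) : (Q A B φ →₀ ℂ) ≃+ (Q A B φ →₀ ℂ))))
    (by
      intro g h
      ext f
      rename_i q
      show Finsupp.equivMapDomain (MulAction.toPerm (g * h)) (Multiplicative.toAdd f) q =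
        Finsupp.equivMapDomain (MulAction.toPerm g)
          (Finsupp.equivMapDomain (MulAction.toPerm h) (Multiplicative.toAdd f)) q
      simp [Finsupp.equivMapDomain_apply, mul_smul])

theorem act_apply (g : HNNExtension G A B φ) (f : Q A B φ →₀ ℂ) :
    Multiplicative.toAdd (act A B φ g (Multiplicative.ofAdd f)) =
      Finsupp.mapDomain (fun q => g • q) f := by
  show Finsupp.equivMapDomain (MulAction.toPerm g) f = _
  rw [Finsupp.equivMapDomain_eq_mapDomain]
  rfl


noncomputable def F : HNNExtension G A B φ →*
    (Multiplicative (Q A B φ →₀ ℂ)) ⋊[act A B φ] HNNExtension G A B φ :=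
  lift (SemidirectProduct.inr.comp of)
    ⟨Multiplicative.ofAdd (Finsupp.single (QuotientGroup.mk t) 1), t⟩
    (by
      intro a
      ext : 1
      · show _ * (act A B φ t) 1 = 1 * (act A B φ (of (φ a : G))) _
        rw [map_one, mul_one, one_mul]
        show _ = Multiplicative.ofAdd (Finsupp.equivMapDomain (MulAction.toPerm
          ((of (φ a : G)) : HNNExtension G A B φ)) (Finsupp.single (QuotientGroup.mk t) 1))
        rw [Finsupp.equivMapDomain_single]
        have hq : (MulAction.toPerm ((of (φ a : G)) : HNNExtension G A B φ))
            (QuotientGroup.mk t : Q A B φ) = QuotientGroup.mk t := by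
          show ((of (φ a : G) : HNNExtension G A B φ) •
            (QuotientGroup.mk t : Q A B φ)) = _
          show (QuotientGroup.mk ((of (φ a : G) : HNNExtension G A B φ) * t) : Q A B φ) = _
          rw [← t_mul_of a]
          exact QuotientGroup.mk_mul_of_mem t (Subgroup.mem_map_of_mem of a.2)
        rw [hq]
      · show t * of (a : G) = of (φ a : G) * t
        exact t_mul_of a)

theorem right_F (x : HNNExtension G A B φ) : (F A B φ x).right = x := by
  have h : SemidirectProduct.rightHom.comp (F A B φ) =
      MonoidHom.id (HNNExtension G A B φ) := by
    ext x
    · simp [F]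
    · simp [F]
  exact DFunLike.congr_fun h x

noncomputable def b (x : HNNExtension G A B φ) : Q A B φ →₀ ℂ :=
  Multiplicative.toAdd (F A B φ x).left

theorem b_cocycle (g h : HNNExtension G A B φ) :
    b A B φ (g * h) = b A B φ g + Finsupp.mapDomain (fun q => g • q) (b A B φ h) := by
  unfold b
  rw [map_mul, SemidirectProduct.mul_left, toAdd_mul]
  congr 1
  rw [right_F, ← act_apply]
  simp

theorem b_of (x : G) : b A B φ (of x) = 0 := by
  unfold b; rw [F, lift_of]; rfl

theorem b_t : b A B φ t = Finsupp.single (QuotientGroup.mk t) 1 := by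
  unfold b; rw [F, lift_t]; rfl


theorem b_formula (g : G) (n : ℕ) :
    b A B φ ((of g * t) ^ n) =
      ∑ k ∈ Finset.range n,
        Finsupp.single (QuotientGroup.mk ((of g * t) ^ k * (of g * t))) 1 := by
  induction n with
  | zero =>
      have h1 : (1 : HNNExtension G A B φ) = of 1 := (map_one _).symm
      rw [pow_zero, h1, b_of, Finset.range_zero, Finset.sum_empty]
  | succ n ih =>
      rw [pow_succ, b_cocycle, ih, Finset.sum_range_succ]
      congr 1
      have h2 : b A B φ (of g * t) =
          Finsupp.single (QuotientGroup.mk (of g * t)) 1 := by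
        rw [b_cocycle, b_of, b_t, zero_add, Finsupp.mapDomain_single]
        rfl
      rw [h2, Finsupp.mapDomain_single]
      rfl

theorem pow_not_mem (g : G) (m : ℕ) (hm : 1 ≤ m) :
    (of g * t) ^ m ∉ A.map (of : G →* HNNExtension G A B φ) := by
  intro hmem
  obtain ⟨a, -, ha⟩ := hmem
  have h0 : b A B φ ((of g * t) ^ m) = 0 := by rw [← ha, b_of]
  have h1 := b_formula A B φ g m
  rw [h0] at h1
  have h2 := congrArg ((Finsupp.liftAddHom (fun _ : Q A B φ => AddMonoidHom.id ℂ))) h1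
  rw [map_zero, map_sum] at h2
  simp only [Finsupp.liftAddHom_apply_single, AddMonoidHom.id_apply, Finset.sum_const,
    Finset.card_range, nsmul_eq_mul, mul_one] at h2
  have : (m : ℂ) ≠ 0 := Nat.cast_ne_zero.mpr (by omega)
  exact this h2.symm

theorem mk_pow_inj (g : G) {j k : ℕ}
    (h : (QuotientGroup.mk ((of g * t) ^ j * (of g * t)) : Q A B φ) =
         QuotientGroup.mk ((of g * t) ^ k * (of g * t))) : j = k := by
  by_contra hne
  wlog hjk : j < k generalizing j k
  · exact this h.symm (Ne.symm hne) (by omega)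
  have e1 : (of g * t : HNNExtension G A B φ) ^ j * (of g * t) =
      (of g * t) ^ (j + 1) := (pow_succ _ _).symm
  have e2 : (of g * t : HNNExtension G A B φ) ^ k * (of g * t) =
      (of g * t) ^ (k + 1) := (pow_succ _ _).symm
  rw [e1, e2, QuotientGroup.eq] at h
  have hmul : (of g * t : HNNExtension G A B φ) ^ (j + 1) * (of g * t) ^ (k - j) =
      (of g * t) ^ (k + 1) := by
    rw [← pow_add]; congr 1; omega
  have heq : ((of g * t : HNNExtension G A B φ) ^ (j + 1))⁻¹ * (of g * t) ^ (k + 1) =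
      (of g * t) ^ (k - j) := by rw [← hmul, inv_mul_cancel_left]
  rw [heq] at h
  exact pow_not_mem A B φ g (k - j) (by omega) h

theorem norm_sq (g : G) (n : ℕ) :
    ∑ q ∈ (b A B φ ((of g * t) ^ n)).support,
        ‖b A B φ ((of g * t) ^ n) q‖ ^ 2 = (n : ℝ) := by
  classical
  set x : HNNExtension G A B φ := of g * t with hx
  set qk : ℕ → Q A B φ := fun k => QuotientGroup.mk (x ^ k * x) with hqk
  have hinj : ∀ j k : ℕ, qk j = qk k → j = k := fun j k h => mk_pow_inj A B φ g h
  have hf : b A B φ (x ^ n) = ∑ k ∈ Finset.range n, Finsupp.single (qk k) 1 :=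
    b_formula A B φ g n
  have hdis : ∀ i₁ i₂ : ℕ, i₁ ≠ i₂ →
      Disjoint (Finsupp.single (qk i₁) (1 : ℂ)).support
        (Finsupp.single (qk i₂) (1 : ℂ)).support := by
    intro i₁ i₂ hne
    rw [Finsupp.support_single_ne_zero _ one_ne_zero,
      Finsupp.support_single_ne_zero _ one_ne_zero]
    rw [Finset.disjoint_singleton_left, Finset.mem_singleton]
    exact fun e => hne (hinj _ _ e)
  have hsupp : (b A B φ (x ^ n)).support =
      (Finset.range n).biUnion fun k => (Finsupp.single (qk k) (1 : ℂ)).support := by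
    rw [hf]
    exact Finsupp.support_sum_eq_biUnion _ hdis
  have happ : ∀ k ∈ Finset.range n, b A B φ (x ^ n) (qk k) = 1 := by
    intro k hk
    rw [hf, Finsupp.finset_sum_apply]
    rw [Finset.sum_eq_single_of_mem k hk
      (fun j _ hjk => Finsupp.single_eq_of_ne' (fun e => hjk (hinj j k e)))]
    exact Finsupp.single_eq_same
  rw [hsupp, Finset.sum_biUnion]
  · rw [Finset.sum_congr rfl (fun k hk => ?_)]
    · rw [Finset.sum_const, Finset.card_range, nsmul_eq_mul, mul_one]
    · rw [Finsupp.support_single_ne_zero _ one_ne_zero, Finset.sum_singleton,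
        happ k hk]
      norm_num
  · intro i₁ h₁ i₂ h₂ hne
    simpa [Function.onFun] using hdis i₁ i₂ hne

end Stmt6Aux

open Stmt6Aux in
/-- On the HNN extension `Γ = HNN(G, Λ, θ)` with stable letter `t` and `Λ ≠ G`, there is a
cocycle `b : Γ → ℂ(Γ/Λ)` with `b ≡ 0` on `G` and `b(t) = δ_{tΛ}`; for `g ∈ G \ Λ` and `n ≥ 1`,
`b((gt)ⁿ) = Σ_{k=0}^{n-1} δ_{(gt)^k gtΛ}` is a sum of `n` distinct basis vectors, of squared
ℓ²-norm `n`; in particular `b` is unbounded. -/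
theorem stmt6 {G : Type*} [Group G] (A B : Subgroup G) (φ : A ≃* B) (hA : A ≠ ⊤) :
    ∃ b : HNNExtension G A B φ →
        ((HNNExtension G A B φ ⧸ A.map (of : G →* HNNExtension G A B φ)) →₀ ℂ),
      (∀ g h : HNNExtension G A B φ,
        b (g * h) = b g + Finsupp.mapDomain (fun q => g • q) (b h)) ∧
      (∀ x : G, b (of x) = 0) ∧
      (b t = Finsupp.single (QuotientGroup.mk (t : HNNExtension G A B φ)) 1) ∧
      (∀ g : G, g ∉ A → ∀ n : ℕ, 1 ≤ n →
        (b ((of g * t) ^ n) =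
          ∑ k ∈ Finset.range n,
            Finsupp.single (QuotientGroup.mk ((of g * t) ^ k * (of g * t))) 1) ∧
        Function.Injective (fun k : Fin n =>
          (QuotientGroup.mk ((of g * t) ^ (k : ℕ) * (of g * t)) :
            HNNExtension G A B φ ⧸ A.map (of : G →* HNNExtension G A B φ))) ∧
        (∑ q ∈ (b ((of g * t) ^ n)).support, ‖b ((of g * t) ^ n) q‖ ^ 2 = (n : ℝ))) ∧
      ¬ ∃ C : ℝ, ∀ x : HNNExtension G A B φ,
          ∑ q ∈ (b x).support, ‖b x q‖ ^ 2 ≤ C := by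
  refine ⟨Stmt6Aux.b A B φ, b_cocycle A B φ, b_of A B φ, b_t A B φ,
    fun g _ n _ => ⟨b_formula A B φ g n,
      fun j k h => Fin.ext (mk_pow_inj A B φ g h),
      norm_sq A B φ g n⟩, ?_⟩
  rintro ⟨C, hC⟩
  obtain ⟨g, hg⟩ : ∃ g : G, g ∉ A := by
    by_contra h
    push_neg at h
    exact hA ((Subgroup.eq_top_iff' A).mpr h)
  set n : ℕ := ⌈C⌉₊ + 1 with hn
  have h1 := hC ((of g * t) ^ n)
  rw [norm_sq A B φ g n] at h1
  have h2 : C < (n : ℝ) := by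
    calc C ≤ (⌈C⌉₊ : ℝ) := Nat.le_ceil C
    _ < (n : ℝ) := by exact_mod_cast Nat.lt_succ_self _
  exact absurd h1 (not_le.mpr h2)
end
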